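/- For every linear bottleneck game (W, A, π), the optimal coalition-structure value equals the optimum of the associated linear program: v*(W) = sup { Σ_j c_j·π_j : c is primal-feasible }. (Equivalently, there is an optimal coalition structure in which each coalition gives equal contributions to all its members, every agent uses all of its weight, and each task forms at most one coalition.) -/

import Mathlib

-- The characteristic function of a linear bottleneck game: a coalition `d`
-- (a nonnegative vector of contributions) earns `π j` times its smallest
-- contribution if its support is exactly `A j` for some task `j`, and `0`
-- otherwise.
open Classical in
noncomputable def lbgChar (n m : ℕ) (A : Fin m → Finset (Fin n)) (π : Fin m → ℝ)
    (d : Fin n → ℝ) : ℝ :=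
  if h : ∃ j : Fin m, {i : Fin n | 0 < d i} = ↑(A j) then
    π h.choose * sInf (d '' ↑(A h.choose))
  else 0

/-- The superadditive-cover value of a weight vector `W` in the LBG: the
supremum of the values of coalition structures (finite multisets of nonzero
nonnegative vectors summing to `W`). -/
noncomputable def lbgVStar (n m : ℕ) (A : Fin m → Finset (Fin n)) (π : Fin m → ℝ)
    (W : Fin n → ℝ) : ℝ :=
  sSup {x : ℝ | ∃ CS : Multiset (Fin n → ℝ),
    (∀ d ∈ CS, d ≠ 0 ∧ ∀ i, 0 ≤ d i) ∧ CS.sum = W ∧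
    x = (CS.map (lbgChar n m A π)).sum}



open Classical

private lemma msum_apply {n : ℕ} (s : Multiset (Fin n → ℝ)) (i : Fin n) :
    s.sum i = (s.map (fun d => d i)).sum := by
  induction s using Multiset.induction with
  | empty => simp
  | cons a s ih => simp [ih]

private lemma msum_swap {α β : Type*} (s : Multiset α) (t : Finset β) (f : β → α → ℝ) :
    (s.map (fun a => ∑ j ∈ t, f j a)).sum = ∑ j ∈ t, (s.map (f j)).sum := by
  induction s using Multiset.induction with
  | empty => simp
  | cons a s ih => simp [ih, Finset.sum_add_distrib]

private lemma msum_mul_right {α : Type*} (s : Multiset α) (f : α → ℝ) (b : ℝ) :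
    (s.map (fun a => f a * b)).sum = (s.map f).sum * b := by
  induction s using Multiset.induction with
  | empty => simp
  | cons a s ih => simp [ih, add_mul]

open Classical in
private lemma lbgChar_eq {n m : ℕ} {A : Fin m → Finset (Fin n)} (hAinj : Function.Injective A)
    (π : Fin m → ℝ) (d : Fin n → ℝ) (j : Fin m) (h : {i : Fin n | 0 < d i} = ↑(A j)) :
    lbgChar n m A π d = π j * sInf (d '' ↑(A j)) := by
  have hex : ∃ j' : Fin m, {i : Fin n | 0 < d i} = ↑(A j') := ⟨j, h⟩
  have hc : hex.choose = j := by
    apply hAinj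
    apply Finset.coe_injective
    rw [← hex.choose_spec, h]
  unfold lbgChar
  rw [dif_pos hex, hc]

open Classical in
private lemma lbgChar_sum_form {n m : ℕ} {A : Fin m → Finset (Fin n)}
    (hAinj : Function.Injective A) (π : Fin m → ℝ) (d : Fin n → ℝ) :
    lbgChar n m A π d =
      ∑ j : Fin m, (if {i : Fin n | 0 < d i} = ↑(A j) then π j * sInf (d '' ↑(A j)) else 0) := by
  by_cases hex : ∃ j : Fin m, {i : Fin n | 0 < d i} = ↑(A j)
  · obtain ⟨j0, hj0⟩ := hex
    rw [lbgChar_eq hAinj π d j0 hj0, Finset.sum_eq_single j0]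
    · rw [if_pos hj0]
    · intro b _ hb
      rw [if_neg]
      intro hs
      exact hb (hAinj (Finset.coe_injective (hj0.symm.trans hs))).symm
    · intro h; exact absurd (Finset.mem_univ j0) h
  · unfold lbgChar
    rw [dif_neg hex]
    symm
    apply Finset.sum_eq_zero
    intro j _
    rw [if_neg (fun hs => hex ⟨j, hs⟩)]

open Classical in
private lemma cs_to_lp {n m : ℕ} {W : Fin n → ℝ} {A : Fin m → Finset (Fin n)} {π : Fin m → ℝ}
    (hAinj : Function.Injective A)
    (CS : Multiset (Fin n → ℝ)) (hCS : ∀ d ∈ CS, d ≠ 0 ∧ ∀ i, 0 ≤ d i) (hsum : CS.sum = W) :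
    ∃ c : Fin m → ℝ, (∀ j, 0 ≤ c j) ∧
      (∀ i, ∑ j ∈ Finset.univ.filter (fun j => i ∈ A j), c j ≤ W i) ∧
      (CS.map (lbgChar n m A π)).sum = ∑ j, c j * π j := by
  set g : Fin m → (Fin n → ℝ) → ℝ :=
    fun j d => if {i : Fin n | 0 < d i} = ↑(A j) then sInf (d '' ↑(A j)) else 0 with hg
  refine ⟨fun j => (CS.map (g j)).sum, ?_, ?_, ?_⟩
  · intro j
    apply Multiset.sum_nonneg
    intro y hy
    obtain ⟨d, hd, rfl⟩ := Multiset.mem_map.mp hy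
    simp only [hg]
    split
    · exact Real.sInf_nonneg (fun x hx => by
        obtain ⟨i, _, rfl⟩ := hx; exact (hCS d hd).2 i)
    · exact le_rfl
  · intro i
    rw [← msum_swap]
    have h1 : ∀ d ∈ CS, (∑ j ∈ Finset.univ.filter (fun j => i ∈ A j), g j d) ≤ d i := by
      intro d hd
      by_cases hex : ∃ j0, i ∈ A j0 ∧ {i' : Fin n | 0 < d i'} = ↑(A j0)
      · obtain ⟨j0, hij0, hsupp⟩ := hex
        have heq : ∑ j ∈ Finset.univ.filter (fun j => i ∈ A j), g j d = sInf (d '' ↑(A j0)) := by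
          rw [Finset.sum_eq_single_of_mem j0 (by simp [hij0])]
          · simp only [hg]; rw [if_pos hsupp]
          · intro b _ hb
            simp only [hg]
            rw [if_neg]
            intro hs
            exact hb (hAinj (Finset.coe_injective (hsupp.symm.trans hs))).symm
        rw [heq]
        exact csInf_le (Set.Finite.bddBelow ((A j0 : Set (Fin n)).toFinite.image d))
          ⟨i, hij0, rfl⟩
      · rw [Finset.sum_eq_zero]
        · exact (hCS d hd).2 i
        · intro j hj
          simp only [Finset.mem_filter] at hj
          simp only [hg]
          rw [if_neg (fun hs => hex ⟨j, hj.2, hs⟩)]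
    calc (CS.map fun d => ∑ j ∈ Finset.univ.filter (fun j => i ∈ A j), g j d).sum
        ≤ (CS.map fun d => d i).sum := Multiset.sum_map_le_sum_map _ _ h1
      _ = CS.sum i := (msum_apply CS i).symm
      _ = W i := by rw [hsum]
  · have h2 : ∀ d ∈ CS, lbgChar n m A π d = ∑ j, g j d * π j := by
      intro d _
      rw [lbgChar_sum_form hAinj]
      apply Finset.sum_congr rfl
      intro j _
      simp only [hg]
      split
      · ring
      · ring
    rw [Multiset.map_congr rfl h2, msum_swap]
    apply Finset.sum_congr rfl
    intro j _
    rw [msum_mul_right]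

open Classical in
private lemma lp_to_cs {n m : ℕ} {W : Fin n → ℝ} {A : Fin m → Finset (Fin n)} {π : Fin m → ℝ}
    (hAinj : Function.Injective A) (hAne : ∀ j, (A j).Nonempty)
    (hπ : ∀ j, 0 ≤ π j) (hsingle : ∀ i : Fin n, ∃ j : Fin m, A j = {i})
    (c : Fin m → ℝ) (hc0 : ∀ j, 0 ≤ c j)
    (hfeas : ∀ i, ∑ j ∈ Finset.univ.filter (fun j => i ∈ A j), c j ≤ W i) :
    ∃ CS : Multiset (Fin n → ℝ), (∀ d ∈ CS, d ≠ 0 ∧ ∀ i, 0 ≤ d i) ∧ CS.sum = W ∧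
      ∑ j, c j * π j ≤ (CS.map (lbgChar n m A π)).sum := by
  set r : Fin n → ℝ := fun i => W i - ∑ j ∈ Finset.univ.filter (fun j => i ∈ A j), c j with hr
  have hr0 : ∀ i, 0 ≤ r i := fun i => sub_nonneg.mpr (hfeas i)
  set D : Fin m → (Fin n → ℝ) := fun j i => if i ∈ A j then c j else 0 with hD
  set E : Fin n → (Fin n → ℝ) := fun i i' => if i' = i then r i else 0 with hE
  refine ⟨((Finset.univ.filter (fun j => c j ≠ 0)).val.map D) +
          ((Finset.univ.filter (fun i => r i ≠ 0)).val.map E), ?_, ?_, ?_⟩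
  · intro d hd
    rcases Multiset.mem_add.mp hd with hd | hd
    · obtain ⟨j, hj, rfl⟩ := Multiset.mem_map.mp hd
      have hj' : c j ≠ 0 := by
        have := Finset.mem_filter.mp (Finset.mem_val.mp hj)
        exact this.2
      constructor
      · obtain ⟨i0, hi0⟩ := hAne j
        intro h0
        have := congrFun h0 i0
        simp only [hD, if_pos hi0, Pi.zero_apply] at this
        exact hj' this
      · intro i
        simp only [hD]
        split
        · exact hc0 j
        · exact le_rfl
    · obtain ⟨i, hi, rfl⟩ := Multiset.mem_map.mp hd
      have hi' : r i ≠ 0 := by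
        have := Finset.mem_filter.mp (Finset.mem_val.mp hi)
        exact this.2
      constructor
      · intro h0
        have := congrFun h0 i
        simp only [hE, if_pos rfl, Pi.zero_apply] at this
        exact hi' this
      · intro i'
        simp only [hE]
        split
        · exact hr0 i
        · exact le_rfl
  · funext i'
    rw [Multiset.sum_add, Pi.add_apply, msum_apply, msum_apply, Multiset.map_map,
      Multiset.map_map]
    show (∑ j ∈ Finset.univ.filter (fun j => c j ≠ 0), D j i') +
        (∑ i ∈ Finset.univ.filter (fun i => r i ≠ 0), E i i') = W i'
    have e1 : (∑ j ∈ Finset.univ.filter (fun j => c j ≠ 0), D j i') =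
        ∑ j ∈ Finset.univ.filter (fun j => i' ∈ A j), c j := by
      rw [Finset.sum_filter, Finset.sum_filter]
      apply Finset.sum_congr rfl
      intro j _
      simp only [hD]
      by_cases h1 : c j = 0 <;> by_cases h2 : i' ∈ A j <;> simp [h1, h2]
    have e2 : (∑ i ∈ Finset.univ.filter (fun i => r i ≠ 0), E i i') = r i' := by
      rw [Finset.sum_filter]
      have : ∀ i ∈ Finset.univ, (if r i ≠ 0 then E i i' else 0) =
          if i' = i then r i else 0 := by
        intro i _
        simp only [hE]
        by_cases h1 : r i = 0 <;> by_cases h2 : i' = i <;> simp [h1, h2]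
      rw [Finset.sum_congr rfl this, Finset.sum_ite_eq]
      simp
    rw [e1, e2, hr]
    ring
  · rw [Multiset.map_add, Multiset.sum_add, Multiset.map_map, Multiset.map_map]
    have e1 : ((Finset.univ.filter (fun j => c j ≠ 0)).val.map
        ((lbgChar n m A π) ∘ D)).sum = ∑ j ∈ Finset.univ.filter (fun j => c j ≠ 0),
        lbgChar n m A π (D j) := rfl
    have e2 : ((Finset.univ.filter (fun i => r i ≠ 0)).val.map
        ((lbgChar n m A π) ∘ E)).sum = ∑ i ∈ Finset.univ.filter (fun i => r i ≠ 0),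
        lbgChar n m A π (E i) := rfl
    rw [e1, e2]
    have hval : ∀ j ∈ Finset.univ.filter (fun j => c j ≠ 0),
        lbgChar n m A π (D j) = π j * c j := by
      intro j hj
      have hj' : c j ≠ 0 := (Finset.mem_filter.mp hj).2
      have hpos : 0 < c j := lt_of_le_of_ne (hc0 j) (Ne.symm hj')
      have hsupp : {i : Fin n | 0 < D j i} = ↑(A j) := by
        ext i
        simp only [hD, Set.mem_setOf_eq, Finset.mem_coe]
        by_cases h : i ∈ A j <;> simp [h, hpos]
      have himg : D j '' ↑(A j) = {c j} := by
        ext y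
        constructor
        · rintro ⟨i, hi, rfl⟩
          simp only [Finset.mem_coe] at hi
          simp [hD, hi]
        · rintro hy
          obtain ⟨i0, hi0⟩ := hAne j
          simp only [Set.mem_singleton_iff] at hy
          exact ⟨i0, hi0, by simp [hD, hi0, hy]⟩
      rw [lbgChar_eq hAinj π (D j) j hsupp, himg, csInf_singleton]
    rw [Finset.sum_congr rfl hval]
    have hmain : (∑ j ∈ Finset.univ.filter (fun j => c j ≠ 0), π j * c j) =
        ∑ j, c j * π j := by
      rw [Finset.sum_filter]
      apply Finset.sum_congr rfl
      intro j _
      by_cases h : c j = 0 <;> simp [h, mul_comm]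
    rw [hmain]
    apply le_add_of_nonneg_right
    apply Finset.sum_nonneg
    intro i hi
    have hi' : r i ≠ 0 := (Finset.mem_filter.mp hi).2
    have hpos : 0 < r i := lt_of_le_of_ne (hr0 i) (Ne.symm hi')
    obtain ⟨j, hji⟩ := hsingle i
    have hsupp : {i'' : Fin n | 0 < E i i''} = ↑(A j) := by
      rw [hji, Finset.coe_singleton]
      ext i''
      simp only [hE, Set.mem_setOf_eq, Set.mem_singleton_iff]
      by_cases h : i'' = i <;> simp [h, hpos]
    have himg : E i '' ↑(A j) = {r i} := by
      rw [hji, Finset.coe_singleton, Set.image_singleton]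
      simp [hE]
    rw [lbgChar_eq hAinj π (E i) j hsupp, himg, csInf_singleton]
    exact mul_nonneg (hπ j) (hr0 i)

/-- for every linear bottleneck game, the optimal
coalition-structure value equals the optimum of the associated linear
program. -/
theorem lbg_optimal_value_eq_lp_value
    (n m : ℕ)
    (W : Fin n → ℝ) (A : Fin m → Finset (Fin n)) (π : Fin m → ℝ)
    -- (W, A, π) is a linear bottleneck game:
    (hW : ∀ i, 0 ≤ W i)
    (hAinj : Function.Injective A)
    (hAne : ∀ j, (A j).Nonempty)
    (hπ : ∀ j, 0 ≤ π j)
    (hsingle : ∀ i : Fin n, ∃ j : Fin m, A j = {i}) :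
    lbgVStar n m A π W =
      sSup {x : ℝ | ∃ c : Fin m → ℝ,
        (∀ j, 0 ≤ c j) ∧
        (∀ i, ∑ j ∈ Finset.univ.filter (fun j => i ∈ A j), c j ≤ W i) ∧
        x = ∑ j, c j * π j} := by
  classical
  have hbdd2 : BddAbove {x : ℝ | ∃ c : Fin m → ℝ,
      (∀ j, 0 ≤ c j) ∧
      (∀ i, ∑ j ∈ Finset.univ.filter (fun j => i ∈ A j), c j ≤ W i) ∧
      x = ∑ j, c j * π j} := by
    refine ⟨∑ j, (∑ i, W i) * π j, ?_⟩
    rintro x ⟨c, hc0, hfeas, rfl⟩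
    apply Finset.sum_le_sum
    intro j _
    apply mul_le_mul_of_nonneg_right _ (hπ j)
    obtain ⟨i0, hi0⟩ := hAne j
    calc c j ≤ ∑ j' ∈ Finset.univ.filter (fun j' => i0 ∈ A j'), c j' :=
          Finset.single_le_sum (fun j' _ => hc0 j')
            (Finset.mem_filter.mpr ⟨Finset.mem_univ j, hi0⟩)
      _ ≤ W i0 := hfeas i0
      _ ≤ ∑ i, W i := Finset.single_le_sum (fun i _ => hW i) (Finset.mem_univ i0)
  have h0mem : (0:ℝ) ∈ {x : ℝ | ∃ c : Fin m → ℝ,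
      (∀ j, 0 ≤ c j) ∧
      (∀ i, ∑ j ∈ Finset.univ.filter (fun j => i ∈ A j), c j ≤ W i) ∧
      x = ∑ j, c j * π j} :=
    ⟨fun _ => 0, fun _ => le_rfl, fun i => by simpa using hW i, by simp⟩
  have hsub : {x : ℝ | ∃ CS : Multiset (Fin n → ℝ),
      (∀ d ∈ CS, d ≠ 0 ∧ ∀ i, 0 ≤ d i) ∧ CS.sum = W ∧
      x = (CS.map (lbgChar n m A π)).sum} ⊆ {x : ℝ | ∃ c : Fin m → ℝ,
      (∀ j, 0 ≤ c j) ∧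
      (∀ i, ∑ j ∈ Finset.univ.filter (fun j => i ∈ A j), c j ≤ W i) ∧
      x = ∑ j, c j * π j} := by
    rintro x ⟨CS, hCS, hsum, rfl⟩
    obtain ⟨c, h1, h2, h3⟩ := cs_to_lp hAinj CS hCS hsum
    exact ⟨c, h1, h2, h3⟩
  have hbdd1 : BddAbove {x : ℝ | ∃ CS : Multiset (Fin n → ℝ),
      (∀ d ∈ CS, d ≠ 0 ∧ ∀ i, 0 ≤ d i) ∧ CS.sum = W ∧
      x = (CS.map (lbgChar n m A π)).sum} := hbdd2.mono hsub
  have hzero_feas : ∀ i, ∑ j ∈ Finset.univ.filter (fun j => i ∈ A j),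
      (fun _ : Fin m => (0:ℝ)) j ≤ W i := fun i => by simpa using hW i
  obtain ⟨CS0, hCS0, hsum0, hval0⟩ :=
    lp_to_cs hAinj hAne hπ hsingle (fun _ => 0) (fun _ => le_rfl) hzero_feas
  have hmem0 : ((CS0.map (lbgChar n m A π)).sum) ∈ {x : ℝ | ∃ CS : Multiset (Fin n → ℝ),
      (∀ d ∈ CS, d ≠ 0 ∧ ∀ i, 0 ≤ d i) ∧ CS.sum = W ∧
      x = (CS.map (lbgChar n m A π)).sum} := ⟨CS0, hCS0, hsum0, rfl⟩
  have h0le1 : (0:ℝ) ≤ sSup {x : ℝ | ∃ CS : Multiset (Fin n → ℝ),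
      (∀ d ∈ CS, d ≠ 0 ∧ ∀ i, 0 ≤ d i) ∧ CS.sum = W ∧
      x = (CS.map (lbgChar n m A π)).sum} := by
    refine le_trans ?_ (le_csSup hbdd1 hmem0)
    simpa using hval0
  unfold lbgVStar
  apply le_antisymm
  · apply Real.sSup_le
    · intro x hx
      exact le_csSup hbdd2 (hsub hx)
    · exact le_csSup hbdd2 h0mem
  · apply Real.sSup_le
    · rintro x ⟨c, hc0, hfeas, rfl⟩
      obtain ⟨CS, h1, h2, h3⟩ := lp_to_cs hAinj hAne hπ hsingle c hc0 hfeas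
      exact h3.trans (le_csSup hbdd1 ⟨CS, h1, h2, rfl⟩)
    · exact h0le1
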